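/- No product of two real polynomials, each of the form (1/(n+1))·∑_{j=0}^{n} x^j for the same n ≥ 1, equals (1/(2n+1))·∑_{s=0}^{2n} x^s; more generally: there do not exist real polynomials p, q with nonnegative coefficients, both of degree n ≥ 1 with nonzero constant term, such that p(x)·q(x) = (1/(2n+1)) ∑_{s=0}^{2n} x^s and p(1) = q(1) = 1. -/

import Mathlib

open Polynomial Finset

theorem no_fair_pair_equal_order (n : ℕ) (hn : 1 ≤ n) :
    ¬ ∃ p q : ℝ[X],
      (∀ k, 0 ≤ p.coeff k) ∧ (∀ k, 0 ≤ q.coeff k) ∧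
      p.natDegree = n ∧ q.natDegree = n ∧
      p.coeff 0 ≠ 0 ∧ q.coeff 0 ≠ 0 ∧
      p.eval 1 = 1 ∧ q.eval 1 = 1 ∧
      p * q = Polynomial.C ((1 : ℝ) / (2 * n + 1)) *
        ∑ s ∈ Finset.range (2 * n + 1), (X : ℝ[X]) ^ s := by
  rintro ⟨p, q, hp, hq, hdp, hdq, hp0, hq0, hpe, hqe, hpq⟩
  set c : ℝ := (1 : ℝ) / (2 * n + 1) with hc
  have hcpos : 0 < c := by
    apply div_pos one_pos
    positivity
  have hcoeff : ∀ k, k < 2 * n + 1 → (p * q).coeff k = c := by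
    intro k hk
    rw [hpq, coeff_C_mul, finset_sum_coeff]
    simp only [coeff_X_pow]
    rw [Finset.sum_ite_eq (Finset.range (2 * n + 1)) k (fun _ => (1 : ℝ))]
    simp [Finset.mem_range.mpr hk]
  -- constant coefficient
  have h0 : p.coeff 0 * q.coeff 0 = c := by
    have := hcoeff 0 (by omega)
    rwa [mul_coeff_zero] at this
  -- leading coefficient
  have htop : p.coeff n * q.coeff n = c := by
    have h := coeff_mul_degree_add_degree p q
    rw [hdp, hdq] at h
    have h2 : (p * q).coeff (n + n) = c := hcoeff (n + n) (by omega)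
    rw [h2] at h
    simp only [leadingCoeff, hdp, hdq] at h
    exact h.symm
  -- middle coefficient bound
  have hmid : p.coeff 0 * q.coeff n + p.coeff n * q.coeff 0 ≤ c := by
    have h := hcoeff n (by omega)
    rw [coeff_mul] at h
    have hsub : ({(0, n), (n, 0)} : Finset (ℕ × ℕ)) ⊆ Finset.HasAntidiagonal.antidiagonal n := by
      intro x hx
      simp only [Finset.mem_insert, Finset.mem_singleton] at hx
      rcases hx with h1 | h1 <;> simp [h1]
    have hle := Finset.sum_le_sum_of_subset_of_nonneg hsub
      (fun i _ _ => mul_nonneg (hp i.1) (hq i.2))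
    rw [h] at hle
    have hne : ((0 : ℕ), n) ≠ ((n : ℕ), 0) := by
      intro h; exact absurd (congrArg Prod.fst h) (by simp; omega)
    rw [Finset.sum_insert (by simp [hne]), Finset.sum_singleton] at hle
    exact hle
  nlinarith [sq_nonneg (p.coeff 0 * q.coeff n - p.coeff n * q.coeff 0),
    mul_nonneg (hp 0) (hq n), mul_nonneg (hp n) (hq 0), sq_nonneg c]
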